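/- Let M ∈ GL(3, ℤ) have characteristic polynomial x³ − k₁x² − k₂x − k₃ with k₃ = ±1. With f_{M²} and f_M the associated forms, f_{M²} = ±(k₁k₂ + k₃) · f_M. Consequently, if there exists v ∈ ℤ³ with f_{M²}(v) = ±1, then k₁k₂ + k₃ = ±1. -/

import Mathlib

/-- The integral form associated with a matrix `N`: `f_N(v) = det(v, Nv, N²v, …)`. -/
def assocForm (m : ℕ) (N : Matrix (Fin m) (Fin m) ℤ) (v : Fin m → ℤ) : ℤ :=
  Matrix.det (Matrix.of fun i j : Fin m => ((N ^ (j : ℕ)).mulVec v) i)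

theorem stmt16 (M : Matrix (Fin 3) (Fin 3) ℤ) (k₁ k₂ k₃ : ℤ)
    (hchar : M.charpoly = Polynomial.X ^ 3 - Polynomial.C k₁ * Polynomial.X ^ 2
      - Polynomial.C k₂ * Polynomial.X - Polynomial.C k₃)
    (hk : k₃ = 1 ∨ k₃ = -1) :
    ((∀ v : Fin 3 → ℤ, assocForm 3 (M ^ 2) v = (k₁ * k₂ + k₃) * assocForm 3 M v) ∨
     (∀ v : Fin 3 → ℤ, assocForm 3 (M ^ 2) v = -((k₁ * k₂ + k₃) * assocForm 3 M v))) ∧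
    ((∃ v : Fin 3 → ℤ, assocForm 3 (M ^ 2) v = 1 ∨ assocForm 3 (M ^ 2) v = -1) →
      (k₁ * k₂ + k₃ = 1 ∨ k₁ * k₂ + k₃ = -1)) := by
  have hCH0 := Matrix.aeval_self_charpoly M
  rw [hchar] at hCH0
  simp only [map_sub, map_mul, map_pow, Polynomial.aeval_X, Polynomial.aeval_C] at hCH0
  have hCH : M ^ 3 = k₁ • M ^ 2 + k₂ • M + k₃ • (1 : Matrix (Fin 3) (Fin 3) ℤ) := by
    rw [sub_sub, sub_sub, sub_eq_zero] at hCH0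
    rw [hCH0]
    simp only [Algebra.smul_def, mul_one]
    abel
  have key : ∀ v : Fin 3 → ℤ, assocForm 3 (M ^ 2) v = -((k₁ * k₂ + k₃) * assocForm 3 M v) := by
    intro v
    have hb3 : (M ^ 3).mulVec v = k₁ • (M ^ 2).mulVec v + k₂ • M.mulVec v + k₃ • v := by
      rw [hCH]
      simp only [Matrix.add_mulVec, Matrix.smul_mulVec, Matrix.one_mulVec]
    have hb4 : (M ^ 4).mulVec v =
        k₁ • ((M ^ 3).mulVec v) + k₂ • (M ^ 2).mulVec v + k₃ • M.mulVec v := by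
      have h4 : M ^ 4 = M * M ^ 3 := by rw [← pow_succ']
      rw [h4, ← Matrix.mulVec_mulVec, hb3, Matrix.mulVec_add, Matrix.mulVec_add,
        Matrix.mulVec_smul, Matrix.mulVec_smul, Matrix.mulVec_smul,
        Matrix.mulVec_mulVec, Matrix.mulVec_mulVec, ← pow_succ',
        show M * M = M ^ 2 from (sq M).symm]
      norm_num
      rw [hb3]
      funext i
      simp only [Pi.add_apply, Pi.mul_apply, Pi.smul_apply, smul_eq_mul, Pi.intCast_apply, Int.cast_id]
      ring
    rw [hb3] at hb4
    simp only [assocForm, Matrix.det_fin_three, Matrix.of_apply]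
    norm_num [← pow_mul]
    have e0 := congrFun hb4 0
    have e1 := congrFun hb4 1
    have e2 := congrFun hb4 2
    simp only [Pi.add_apply, Pi.smul_apply, smul_eq_mul] at e0 e1 e2
    rw [e0, e1, e2]
    ring
  refine ⟨Or.inr key, ?_⟩
  rintro ⟨v, hv⟩
  have hdvd : (k₁ * k₂ + k₃) ∣ 1 := by
    rcases hv with h | h <;> rw [key v] at h
    · exact ⟨-(assocForm 3 M v), by linarith [h]⟩
    · exact ⟨assocForm 3 M v, by linarith [h]⟩
  exact Int.isUnit_iff.mp (isUnit_of_dvd_one hdvd)
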